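/- Let X be a finite compact Hausdorff space (a finite discrete space). Then I_f(X) is a neighborhood retract of I(X): there exist an open subset U of I(X) containing I_f(X) and a continuous map ρ : U → I_f(X) with ρ(μ) = μ for every μ ∈ I_f(X). -/

import Mathlib

open Real Set Topology

/-- The Dirac measure `δ_x` on `X`, as a functional on `C(X, ℝ)`: `δ_x(φ) = φ(x)`. -/
def dirac (X : Type*) [TopologicalSpace X] (x : X) : C(X, ℝ) → ℝ := fun φ => φ x

/-- The max-plus combination `⊕_{i=1}^n λ_i ⊙ δ_{x_i}`, i.e. the functional
`φ ↦ max_{1 ≤ i ≤ n} (λ_i + φ(x_i))`. -/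
noncomputable def maxPlus {X : Type*} [TopologicalSpace X] {n : ℕ}
    (lam : Fin n → ℝ) (x : Fin n → X) : C(X, ℝ) → ℝ :=
  fun φ => ⨆ i, (lam i + φ (x i))

/-- `μ : C(X, ℝ) → ℝ` is an idempotent probability measure:
(1) `μ(c_λ) = λ` for constant functions; (2) `μ(λ + φ) = λ + μ(φ)`;
(3) `μ(max(φ, ψ)) = max(μ(φ), μ(ψ))`. -/
def IsIPM {X : Type*} [TopologicalSpace X] (μ : C(X, ℝ) → ℝ) : Prop :=
  (∀ c : ℝ, μ (ContinuousMap.const X c) = c) ∧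
  (∀ (c : ℝ) (φ : C(X, ℝ)), μ (ContinuousMap.const X c + φ) = c + μ φ) ∧
  (∀ φ ψ : C(X, ℝ), μ (φ ⊔ ψ) = max (μ φ) (μ ψ))

/-- Membership in `I_ω(X)`: idempotent probability measures with finite support, i.e.
`μ = ⊕_{i=1}^n λ_i ⊙ δ_{x_i}` with `x_i` pairwise distinct, `λ_i ≤ 0` and `max_i λ_i = 0`. -/
def IsFS {X : Type*} [TopologicalSpace X] (μ : C(X, ℝ) → ℝ) : Prop :=
  ∃ n : ℕ, 0 < n ∧ ∃ (x : Fin n → X) (lam : Fin n → ℝ),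
    Function.Injective x ∧ (∀ i, lam i ≤ 0) ∧ (∃ i, lam i = 0) ∧ μ = maxPlus lam x

/-- Membership in `I_f(X)`: `μ = ⊕_{i=1}^n λ_i ⊙ δ_{x_i}` with `x_i` pairwise distinct,
a unique index `i₀` with `λ_{i₀} = 0`, and `λ_i ≤ -ln(n+1)` for every `i ≠ i₀`. -/
def IsIf {X : Type*} [TopologicalSpace X] (μ : C(X, ℝ) → ℝ) : Prop :=
  ∃ n : ℕ, 0 < n ∧ ∃ (x : Fin n → X) (lam : Fin n → ℝ) (i0 : Fin n),
    Function.Injective x ∧ lam i0 = 0 ∧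
    (∀ i, i ≠ i0 → lam i ≤ -Real.log (n + 1)) ∧ μ = maxPlus lam x
open Real Set Topology Filter

set_option linter.unusedSectionVars false

section Aux
variable {X : Type*} [TopologicalSpace X] [T2Space X] [Finite X]

noncomputable instance fintypeOfFiniteX : Fintype X := Fintype.ofFinite X

open scoped Classical in
noncomputable def testFn (x : X) (K : ℝ) : C(X, ℝ) :=
  ⟨fun y => if y = x then 0 else -K, continuous_of_discreteTopology⟩

open scoped Classical in
theorem testFn_apply (x : X) (K : ℝ) (y : X) :
    testFn x K y = if y = x then 0 else -K := rfl

variable {μ : C(X, ℝ) → ℝ}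

theorem IPM.mono (h : IsIPM μ) {φ ψ : C(X, ℝ)} (hle : φ ≤ ψ) : μ φ ≤ μ ψ := by
  have hs : φ ⊔ ψ = ψ := sup_eq_right.2 hle
  have h2 := h.2.2 φ ψ
  rw [hs] at h2
  rw [h2]; exact le_max_left _ _

theorem testFn_le_zero (x : X) {K : ℝ} (hK : 0 ≤ K) :
    testFn x K ≤ ContinuousMap.const X 0 := by
  intro y
  classical
  show (if y = x then (0:ℝ) else -K) ≤ 0
  split <;> simp [hK]

theorem const_le_testFn (x : X) {K : ℝ} (hK : 0 ≤ K) :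
    ContinuousMap.const X (-K) ≤ testFn x K := by
  intro y
  classical
  show -K ≤ (if y = x then (0:ℝ) else -K)
  split
  · linarith
  · exact le_rfl

theorem mu_testFn_nonpos (h : IsIPM μ) (x : X) {K : ℝ} (hK : 0 ≤ K) :
    μ (testFn x K) ≤ 0 := by
  have := IPM.mono h (testFn_le_zero x hK)
  rwa [h.1 0] at this

theorem neg_le_mu_testFn (h : IsIPM μ) (x : X) {K : ℝ} (hK : 0 ≤ K) :
    -K ≤ μ (testFn x K) := by
  have := IPM.mono h (const_le_testFn x hK)
  rwa [h.1 (-K)] at this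

/-- key step identity -/
theorem testFn_eq_sup (x : X) {K K' : ℝ} (hK : 0 ≤ K) (hKK' : K ≤ K') :
    testFn x K = testFn x K' ⊔ ContinuousMap.const X (-K) := by
  ext y
  classical
  simp only [ContinuousMap.sup_apply, testFn_apply, ContinuousMap.const_apply]
  split
  · simp [neg_nonpos.2 hK]
  · rw [sup_eq_right.2 (by linarith : -K' ≤ -K)]

theorem mu_testFn_max (h : IsIPM μ) (x : X) {K K' : ℝ} (hK : 0 ≤ K) (hKK' : K ≤ K') :
    μ (testFn x K) = max (μ (testFn x K')) (-K) := by
  rw [testFn_eq_sup x hK hKK', h.2.2, h.1]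

end Aux
section Aux2
variable {X : Type*} [TopologicalSpace X] [T2Space X] [Finite X]

/-- the weight `u_x(μ) = e^{λ_x(μ)}`. -/
noncomputable def uW (μ : C(X, ℝ) → ℝ) (x : X) : ℝ :=
  ⨅ K : ℕ, Real.exp (μ (testFn x K))

variable {μ : C(X, ℝ) → ℝ}

theorem uW_bddBelow (μ : C(X, ℝ) → ℝ) (x : X) :
    BddBelow (Set.range fun K : ℕ => Real.exp (μ (testFn x K))) :=
  ⟨0, by rintro v ⟨K, rfl⟩; positivity⟩

theorem uW_nonneg (μ : C(X, ℝ) → ℝ) (x : X) : 0 ≤ uW μ x :=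
  le_ciInf fun K => (Real.exp_pos _).le

theorem uW_le (x : X) (K : ℕ) : uW μ x ≤ Real.exp (μ (testFn x K)) :=
  ciInf_le (uW_bddBelow μ x) K

theorem mu_testFn_antitone (h : IsIPM μ) (x : X) :
    Antitone fun K : ℕ => μ (testFn x (K : ℝ)) := by
  intro K K' hKK'
  simp only
  rw [mu_testFn_max h x (K := (K : ℝ)) (K' := (K' : ℝ)) (by positivity)
      (by exact_mod_cast hKK')]
  exact le_max_left _ _

/-- the key identity: `e^{μ(χ_x^K)} = max (u_x(μ)) (e^{-K})`. -/
theorem exp_mu_testFn_eq (h : IsIPM μ) (x : X) (K : ℕ) :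
    Real.exp (μ (testFn x K)) = max (uW μ x) (Real.exp (-(K : ℝ))) := by
  apply le_antisymm
  · -- ≤ : approximate the infimum
    apply le_of_forall_pos_le_add
    intro ε hε
    have hlt : uW μ x < uW μ x + ε := by linarith
    obtain ⟨K'', hK''⟩ := exists_lt_of_ciInf_lt hlt
    set K' : ℕ := max K K'' with hK'
    have h1 : μ (testFn x (K' : ℝ)) ≤ μ (testFn x (K'' : ℝ)) :=
      mu_testFn_antitone h x (le_max_right _ _)
    have h2 : Real.exp (μ (testFn x (K' : ℝ))) < uW μ x + ε :=
      lt_of_le_of_lt (Real.exp_le_exp.2 h1) hK''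
    have h3 : μ (testFn x (K : ℝ)) = max (μ (testFn x (K' : ℝ))) (-(K : ℝ)) :=
      mu_testFn_max h x (by positivity) (by exact_mod_cast le_max_left K K'')
    rw [h3, Monotone.map_max Real.exp_monotone]
    apply max_le
    · exact h2.le.trans (by have := le_max_left (uW μ x) (Real.exp (-(K:ℝ))); linarith)
    · exact le_add_of_le_of_nonneg (le_max_right _ _) hε.le
  · apply max_le (uW_le x K)
    exact Real.exp_le_exp.2 (neg_le_mu_testFn h x (by positivity))

theorem uW_le_one (h : IsIPM μ) (x : X) : uW μ x ≤ 1 := by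
  have := uW_le (μ := μ) x 0
  have h0 := mu_testFn_nonpos h x (K := ((0:ℕ):ℝ)) (by norm_num)
  calc uW μ x ≤ Real.exp (μ (testFn x (0:ℕ))) := this
    _ ≤ 1 := by rw [← Real.exp_zero]; exact Real.exp_le_exp.2 h0

end Aux2
section Aux3
variable {X : Type*} [TopologicalSpace X] [T2Space X] [Finite X]

theorem exp_neg_nat_tendsto :
    Filter.Tendsto (fun K : ℕ => Real.exp (-(K : ℝ))) atTop (nhds 0) :=
  Real.tendsto_exp_atBot.comp (tendsto_neg_atBot_iff.mpr tendsto_natCast_atTop_atTop)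

theorem continuous_uW (x : X) :
    Continuous (fun μ : {μ : C(X, ℝ) → ℝ // IsIPM μ} => uW μ.1 x) := by
  have hcont : ∀ K : ℕ, Continuous
      (fun μ : {μ : C(X, ℝ) → ℝ // IsIPM μ} => Real.exp (μ.1 (testFn x K))) := by
    intro K
    exact Real.continuous_exp.comp ((continuous_apply (testFn x (K:ℝ))).comp
      continuous_subtype_val)
  have huni : TendstoUniformly
      (fun (K : ℕ) (μ : {μ : C(X, ℝ) → ℝ // IsIPM μ}) => Real.exp (μ.1 (testFn x K)))
      (fun μ => uW μ.1 x) atTop := by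
    rw [Metric.tendstoUniformly_iff]
    intro ε hε
    have := (exp_neg_nat_tendsto.eventually (gt_mem_nhds hε))
    filter_upwards [this] with K hK μ
    have hid := exp_mu_testFn_eq μ.2 x K
    have h0 := uW_nonneg μ.1 x
    rw [Real.dist_eq, abs_sub_lt_iff]
    constructor
    · have : uW μ.1 x ≤ Real.exp (μ.1 (testFn x K)) := uW_le x K
      linarith
    · have hle : Real.exp (μ.1 (testFn x K)) ≤ max (uW μ.1 x) (Real.exp (-(K:ℝ))) := hid.le
      have hm : max (uW μ.1 x) (Real.exp (-(K:ℝ))) ≤ uW μ.1 x + Real.exp (-(K:ℝ)) := by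
        apply max_le <;> [linarith [Real.exp_pos (-(K:ℝ))]; linarith]
      linarith
  exact huni.continuous (Filter.Eventually.of_forall hcont).frequently

variable {μ : C(X, ℝ) → ℝ}

theorem maxPlus_bddAbove {n : ℕ} (lam : Fin n → ℝ) (xs : Fin n → X) (φ : C(X, ℝ)) :
    BddAbove (Set.range fun i => lam i + φ (xs i)) :=
  Set.Finite.bddAbove (Set.finite_range _)

/-- values of the weights for a measure in maxPlus form -/
theorem uW_of_rep {n : ℕ} (hn : 0 < n) (xs : Fin n → X) (lam : Fin n → ℝ)
    (hinj : Function.Injective xs) (hlam0 : ∀ i, lam i ≤ 0)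
    (hmu : μ = maxPlus lam xs) :
    (∀ j, uW μ (xs j) = Real.exp (lam j)) ∧ (∀ y, y ∉ Set.range xs → uW μ y = 0) := by
  classical
  haveI : Nonempty (Fin n) := ⟨⟨0, hn⟩⟩
  have heval : ∀ (y : X) (K : ℝ), μ (testFn y K) = ⨆ i, (lam i + testFn y K (xs i)) := by
    intro y K; rw [hmu]; rfl
  constructor
  · intro j
    have hub : ∀ K : ℕ, μ (testFn (xs j) K) ≤ max (lam j) (-(K:ℝ)) := by
      intro K
      rw [heval]
      apply ciSup_le
      intro i
      by_cases hij : i = j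
      · subst hij; simp [testFn_apply]
      · have : xs i ≠ xs j := fun hc => hij (hinj hc)
        simp only [testFn_apply, if_neg this]
        have := hlam0 i
        have : lam i + -(K:ℝ) ≤ -(K:ℝ) := by linarith
        exact this.trans (le_max_right _ _)
    have hlb : ∀ K : ℕ, lam j ≤ μ (testFn (xs j) K) := by
      intro K
      rw [heval]
      have := le_ciSup (maxPlus_bddAbove lam xs (testFn (xs j) K)) j
      simpa [testFn_apply] using this
    apply le_antisymm
    · -- uW ≤ exp (lam j)
      obtain ⟨K, hK⟩ : ∃ K : ℕ, Real.exp (-(K:ℝ)) < Real.exp (lam j) :=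
        (exp_neg_nat_tendsto.eventually (gt_mem_nhds (Real.exp_pos (lam j)))).exists
      calc uW μ (xs j) ≤ Real.exp (μ (testFn (xs j) K)) := uW_le _ _
        _ ≤ max (Real.exp (lam j)) (Real.exp (-(K:ℝ))) := by
            rw [← Monotone.map_max Real.exp_monotone]
            exact Real.exp_le_exp.2 (hub K)
        _ = Real.exp (lam j) := max_eq_left hK.le
    · exact le_ciInf fun K => Real.exp_le_exp.2 (hlb K)
  · intro y hy
    have hub : ∀ K : ℕ, μ (testFn y K) ≤ -(K:ℝ) := by
      intro K
      rw [heval]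
      apply ciSup_le
      intro i
      have : xs i ≠ y := fun hc => hy ⟨i, hc⟩
      simp only [testFn_apply, if_neg this]
      linarith [hlam0 i]
    apply le_antisymm
    · exact ge_of_tendsto' exp_neg_nat_tendsto
        (fun K => (uW_le y K).trans (Real.exp_le_exp.2 (hub K)))
    · exact uW_nonneg μ y

end Aux3
section Aux4
open scoped Classical

theorem continuous_fold_max {ι α : Type*} [TopologicalSpace α] (s : Finset ι)
    (f : ι → α → ℝ) (hf : ∀ i, Continuous (f i)) (c : ℝ) :
    Continuous (fun a => s.fold max c (fun i => f i a)) := by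
  classical
  induction s using Finset.induction_on with
  | empty => simpa using continuous_const
  | insert _ _ hnotmem ih =>
    simp only [Finset.fold_insert hnotmem]
    exact Continuous.max (hf _) ih

theorem continuous_fold_min {ι α : Type*} [TopologicalSpace α] (s : Finset ι)
    (f : ι → α → ℝ) (hf : ∀ i, Continuous (f i)) (c : ℝ) :
    Continuous (fun a => s.fold min c (fun i => f i a)) := by
  classical
  induction s using Finset.induction_on with
  | empty => simpa using continuous_const
  | insert _ _ hnotmem ih =>
    simp only [Finset.fold_insert hnotmem]
    exact Continuous.min (hf _) ih

variable {X : Type*} [TopologicalSpace X] [T2Space X] [Finite X]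

/-- `t`: max of the weights away from `x0`. -/
noncomputable def tV (x0 : X) (μ : C(X, ℝ) → ℝ) : ℝ :=
  Finset.univ.fold max 0 (fun x => if x = x0 then 0 else uW μ x)

/-- `s`: the kill level. -/
noncomputable def sV (x0 : X) (μ : C(X, ℝ) → ℝ) : ℝ :=
  ((Finset.univ.erase x0).powerset.filter (fun A => 2 ≤ A.card)).fold max 0
    (fun A => min (A.fold min 1 (fun x => uW μ x))
      (max 0 (tV x0 μ - 1 / (A.card + 2))))

/-- `w`: the new weights. -/
noncomputable def wV (x0 : X) (μ : C(X, ℝ) → ℝ) (x : X) : ℝ :=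
  if x = x0 then 1 else min (max 0 (uW μ x - sV x0 μ)) (1/3)

/-- the retraction formula. -/
noncomputable def rhoF (x0 : X) (μ : C(X, ℝ) → ℝ) : C(X, ℝ) → ℝ :=
  fun φ => Real.log (Finset.univ.fold max 0 (fun x => wV x0 μ x * Real.exp (φ x)))

theorem sV_nonneg (x0 : X) (μ : C(X, ℝ) → ℝ) : 0 ≤ sV x0 μ :=
  (Finset.le_fold_max _).2 (Or.inl le_rfl)

theorem wV_nonneg (x0 : X) (μ : C(X, ℝ) → ℝ) (x : X) : 0 ≤ wV x0 μ x := by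
  unfold wV
  split
  · norm_num
  · exact le_min (le_max_left _ _) (by norm_num)

theorem wV_x0 (x0 : X) (μ : C(X, ℝ) → ℝ) : wV x0 μ x0 = 1 := if_pos rfl

theorem wV_pos_iff (x0 : X) (μ : C(X, ℝ) → ℝ) {x : X} (hx : x ≠ x0) :
    0 < wV x0 μ x ↔ sV x0 μ < uW μ x := by
  unfold wV
  rw [if_neg hx]
  constructor
  · intro h
    have h1 : 0 < max 0 (uW μ x - sV x0 μ) := lt_of_lt_of_le h (min_le_left _ _)
    rcases max_cases 0 (uW μ x - sV x0 μ) with ⟨he, _⟩ | ⟨he, hle⟩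
    · rw [he] at h1; exact absurd h1 (lt_irrefl 0)
    · linarith [h1, he]
  · intro h
    apply lt_min
    · exact lt_of_lt_of_le (by linarith) (le_max_right _ _)
    · norm_num

theorem continuous_tV (x0 : X) :
    Continuous (fun μ : {μ : C(X, ℝ) → ℝ // IsIPM μ} => tV x0 μ.1) := by
  unfold tV
  apply continuous_fold_max
  intro x
  by_cases h : x = x0
  · simp only [if_pos h]; exact continuous_const
  · simp only [if_neg h]; exact continuous_uW x

theorem continuous_sV (x0 : X) :
    Continuous (fun μ : {μ : C(X, ℝ) → ℝ // IsIPM μ} => sV x0 μ.1) := by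
  apply continuous_fold_max
  intro A
  apply Continuous.min
  · exact continuous_fold_min _ _ (fun x => continuous_uW x) _
  · exact Continuous.max continuous_const ((continuous_tV x0).sub continuous_const)

theorem continuous_wV (x0 : X) (x : X) :
    Continuous (fun μ : {μ : C(X, ℝ) → ℝ // IsIPM μ} => wV x0 μ.1 x) := by
  unfold wV
  split
  · exact continuous_const
  · exact Continuous.min
      (Continuous.max continuous_const ((continuous_uW x).sub (continuous_sV x0)))
      continuous_const

theorem continuous_rhoF (x0 : X) :
    Continuous (fun μ : {μ : C(X, ℝ) → ℝ // IsIPM μ} => rhoF x0 μ.1) := by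
  apply continuous_pi
  intro φ
  unfold rhoF
  apply Continuous.log
  · exact continuous_fold_max _ _
      (fun x => (continuous_wV x0 x).mul continuous_const) _
  · intro μ
    have h1 : wV x0 μ.1 x0 * Real.exp (φ x0) ≤
        Finset.univ.fold max 0 (fun x => wV x0 μ.1 x * Real.exp (φ x)) :=
      (Finset.le_fold_max _).2 (Or.inr ⟨x0, Finset.mem_univ x0, le_rfl⟩)
    have h2 : (0:ℝ) < wV x0 μ.1 x0 * Real.exp (φ x0) := by
      rw [wV_x0]; positivity
    exact ne_of_gt (lt_of_lt_of_le h2 h1)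

/-- the key computation: the log-max-exp functional equals a maxPlus combination. -/
theorem log_fold_eq_maxPlus {n : ℕ} (hn : 0 < n) (w : X → ℝ) (hw0 : ∀ x, 0 ≤ w x)
    (xs : Fin n → X) (hpos : ∀ i, 0 < w (xs i))
    (hsupp : ∀ x, x ∉ Set.range xs → w x = 0) (φ : C(X, ℝ)) :
    Real.log (Finset.univ.fold max 0 (fun x => w x * Real.exp (φ x)))
      = ⨆ i, (Real.log (w (xs i)) + φ (xs i)) := by
  haveI : Nonempty (Fin n) := ⟨⟨0, hn⟩⟩
  set F := Finset.univ.fold max 0 (fun x => w x * Real.exp (φ x)) with hF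
  set R := ⨆ i, (Real.log (w (xs i)) + φ (xs i)) with hR
  have hFpos : 0 < F := by
    have h1 : w (xs ⟨0, hn⟩) * Real.exp (φ (xs ⟨0, hn⟩)) ≤ F :=
      (Finset.le_fold_max _).2 (Or.inr ⟨xs ⟨0, hn⟩, Finset.mem_univ _, le_rfl⟩)
    have h2 : (0:ℝ) < w (xs ⟨0, hn⟩) * Real.exp (φ (xs ⟨0, hn⟩)) := by
      have := hpos ⟨0, hn⟩; positivity
    linarith
  have hexp : ∀ i, w (xs i) * Real.exp (φ (xs i)) =
      Real.exp (Real.log (w (xs i)) + φ (xs i)) := by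
    intro i
    rw [Real.exp_add, Real.exp_log (hpos i)]
  have hFR : F = Real.exp R := by
    apply le_antisymm
    · apply (Finset.fold_max_le _).2
      constructor
      · positivity
      · intro x _
        rcases Classical.em (x ∈ Set.range xs) with ⟨i, rfl⟩ | hx
        · rw [hexp i]
          apply Real.exp_le_exp.2
          rw [hR]
          exact le_ciSup (f := fun i => Real.log (w (xs i)) + φ (xs i))
            (Set.Finite.bddAbove (Set.finite_range _)) i
        · rw [hsupp x hx, zero_mul]
          positivity
    · have : R ≤ Real.log F := by
        apply ciSup_le
        intro i
        have h1 : w (xs i) * Real.exp (φ (xs i)) ≤ F :=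
          (Finset.le_fold_max _).2 (Or.inr ⟨xs i, Finset.mem_univ _, le_rfl⟩)
        have h2 : (0:ℝ) < w (xs i) * Real.exp (φ (xs i)) := by
          have := hpos i; positivity
        have := Real.log_le_log h2 h1
        rwa [hexp i, Real.log_exp] at this
      calc Real.exp R ≤ Real.exp (Real.log F) := Real.exp_le_exp.2 this
        _ = F := Real.exp_log hFpos
  rw [hFR, Real.log_exp]

end Aux4
section Aux5
open scoped Classical
variable {X : Type*} [TopologicalSpace X] [T2Space X] [Finite X]
variable {μ : C(X, ℝ) → ℝ}

/-- the core bound: every new weight away from `x0` is at most `1/(p+2)` where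
`p` is the number of positive new weights away from `x0`. -/
theorem wV_le_bound (h : IsIPM μ) (x0 : X)
    {x : X} (hx : x ∈ (Finset.univ.erase x0).filter (fun y => 0 < wV x0 μ y)) :
    wV x0 μ x ≤ 1 / (((Finset.univ.erase x0).filter
      (fun y => 0 < wV x0 μ y)).card + 2) := by
  set T := (Finset.univ.erase x0).filter (fun y => 0 < wV x0 μ y) with hT
  have hxe : x ∈ Finset.univ.erase x0 := Finset.mem_of_mem_filter x hx
  have hxne : x ≠ x0 := Finset.ne_of_mem_erase hxe
  have hwpos : 0 < wV x0 μ x := (Finset.mem_filter.1 hx).2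
  have hsu : sV x0 μ < uW μ x := (wV_pos_iff x0 μ hxne).1 hwpos
  have hwle : wV x0 μ x ≤ uW μ x - sV x0 μ := by
    unfold wV
    rw [if_neg hxne]
    exact (min_le_left _ _).trans (by rw [max_eq_right (by linarith)])
  rcases le_or_gt T.card 1 with hc | hc
  · have h13 : wV x0 μ x ≤ 1/3 := by
      unfold wV; rw [if_neg hxne]; exact min_le_right _ _
    have : (1:ℝ)/3 ≤ 1 / (T.card + 2) := by
      apply one_div_le_one_div_of_le
      · positivity
      · have : (T.card : ℝ) ≤ 1 := by exact_mod_cast hc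
        linarith
    linarith
  · have hTmem : T ∈ ((Finset.univ.erase x0).powerset.filter (fun A => 2 ≤ A.card)) := by
      rw [Finset.mem_filter, Finset.mem_powerset]
      exact ⟨Finset.filter_subset _ _, hc⟩
    have hterm : min (T.fold min 1 (fun y => uW μ y))
        (max 0 (tV x0 μ - 1 / (T.card + 2))) ≤ sV x0 μ :=
      (Finset.le_fold_max _).2 (Or.inr ⟨T, hTmem, le_rfl⟩)
    have hmin_gt : sV x0 μ < T.fold min 1 (fun y => uW μ y) := by
      by_contra hcon
      push_neg at hcon
      rcases (Finset.fold_min_le _).1 hcon with h1 | ⟨y, hyT, hy⟩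
      · linarith [uW_le_one h x]
      · have hyne : y ≠ x0 := Finset.ne_of_mem_erase (Finset.mem_of_mem_filter y hyT)
        have := (wV_pos_iff x0 μ hyne).1 (Finset.mem_filter.1 hyT).2
        linarith
    have hr : max 0 (tV x0 μ - 1 / (T.card + 2)) ≤ sV x0 μ := by
      rcases min_le_iff.1 hterm with h1 | h1
      · linarith
      · exact h1
    have htv : tV x0 μ - 1 / (T.card + 2) ≤ sV x0 μ :=
      le_trans (le_max_right _ _) hr
    have hut : uW μ x ≤ tV x0 μ := by
      apply (Finset.le_fold_max _).2
      exact Or.inr ⟨x, Finset.mem_univ x, by rw [if_neg hxne]⟩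
    linarith

/-- the central membership result: `ρ(μ)` always lies in `I_f(X)`. -/
theorem isIf_rhoF (h : IsIPM μ) (x0 : X) : IsIf (rhoF x0 μ) := by
  set T := (Finset.univ.erase x0).filter (fun y => 0 < wV x0 μ y) with hT
  set S := insert x0 T with hS
  have hx0T : x0 ∉ T := fun hc =>
    (Finset.ne_of_mem_erase (Finset.mem_of_mem_filter _ hc)) rfl
  have hcard : S.card = T.card + 1 := Finset.card_insert_of_notMem hx0T
  have hx0S : x0 ∈ S := Finset.mem_insert_self _ _
  have hn : 0 < S.card := Finset.card_pos.2 ⟨x0, hx0S⟩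
  set e := S.equivFin with he
  set xs : Fin S.card → X := fun i => (e.symm i : X) with hxs
  have hinj : Function.Injective xs := fun a b hab => by
    apply e.symm.injective
    exact Subtype.coe_injective hab
  set i0 := e ⟨x0, hx0S⟩ with hi0
  have hxsi0 : xs i0 = x0 := by
    rw [hxs, hi0]
    simp
  have hmemS : ∀ i, xs i ∈ S := fun i => (e.symm i).2
  have hposS : ∀ i, 0 < wV x0 μ (xs i) := by
    intro i
    rcases Finset.mem_insert.1 (hmemS i) with h1 | h1
    · rw [h1, wV_x0]; norm_num
    · exact (Finset.mem_filter.1 h1).2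
  have hsupp : ∀ x, x ∉ Set.range xs → wV x0 μ x = 0 := by
    intro x hxr
    by_contra hne
    have hpos : 0 < wV x0 μ x := (wV_nonneg x0 μ x).lt_of_ne (Ne.symm hne)
    have hxS : x ∈ S := by
      rcases Classical.em (x = x0) with rfl | hxx0
      · exact hx0S
      · exact Finset.mem_insert_of_mem (Finset.mem_filter.2
          ⟨Finset.mem_erase.2 ⟨hxx0, Finset.mem_univ x⟩, hpos⟩)
    exact hxr ⟨e ⟨x, hxS⟩, by rw [hxs]; simp⟩
  refine ⟨S.card, hn, xs, fun i => Real.log (wV x0 μ (xs i)), i0, hinj, ?_, ?_, ?_⟩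
  · show Real.log (wV x0 μ (xs i0)) = 0
    rw [hxsi0, wV_x0, Real.log_one]
  · intro i hi
    have hxine : xs i ≠ x0 := by
      intro hc
      exact hi (hinj (by rw [hc, hxsi0]))
    have hxiT : xs i ∈ T := by
      rcases Finset.mem_insert.1 (hmemS i) with h1 | h1
      · exact absurd h1 hxine
      · exact h1
    have hb := wV_le_bound h x0 hxiT
    have hcast : ((T.card : ℝ) + 2) = ((S.card : ℝ) + 1) := by
      rw [hcard]; push_cast; ring
    rw [← hT] at hb
    rw [hcast] at hb
    show Real.log (wV x0 μ (xs i)) ≤ -Real.log ((S.card : ℝ) + 1)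
    calc Real.log (wV x0 μ (xs i)) ≤ Real.log (1 / ((S.card : ℝ) + 1)) :=
          Real.log_le_log (hposS i) hb
      _ = -Real.log ((S.card : ℝ) + 1) := by rw [one_div, Real.log_inv]
  · funext φ
    exact log_fold_eq_maxPlus hn (wV x0 μ) (wV_nonneg x0 μ) xs hposS hsupp φ

end Aux5
section Aux6
open scoped Classical
variable {X : Type*} [TopologicalSpace X] [T2Space X] [Finite X]
variable {μ : C(X, ℝ) → ℝ}

theorem rhoF_fixes (h : IsIPM μ) {n : ℕ} (hn : 0 < n) (xs : Fin n → X)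
    (lam : Fin n → ℝ) (i0 : Fin n) (hinj : Function.Injective xs)
    (h0 : lam i0 = 0) (hbd : ∀ i, i ≠ i0 → lam i ≤ -Real.log (n + 1))
    (hmu : μ = maxPlus lam xs) :
    rhoF (xs i0) μ = μ := by
  have hnpos : (0:ℝ) < (n:ℝ) + 1 := by positivity
  have hlam0 : ∀ i, lam i ≤ 0 := by
    intro i
    by_cases hi : i = i0
    · rw [hi, h0]
    · exact (hbd i hi).trans (neg_nonpos.2 (Real.log_nonneg (by linarith)))
  have hu := uW_of_rep hn xs lam hinj hlam0 hmu
  have hux0 : uW μ (xs i0) = 1 := by rw [hu.1 i0, h0, Real.exp_zero]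
  have hexpbd : Real.exp (-Real.log ((n:ℝ) + 1)) = 1 / ((n:ℝ) + 1) := by
    rw [Real.exp_neg, Real.exp_log hnpos, one_div]
  have hule : ∀ x, x ≠ xs i0 → uW μ x ≤ 1 / ((n:ℝ) + 1) := by
    intro x hx
    rcases Classical.em (x ∈ Set.range xs) with ⟨j, rfl⟩ | hxr
    · have hj : j ≠ i0 := fun hc => hx (by rw [hc])
      rw [hu.1 j, ← hexpbd]
      exact Real.exp_le_exp.2 (hbd j hj)
    · rw [hu.2 x hxr]; positivity
  have hule3 : ∀ x, x ≠ xs i0 → uW μ x ≤ 1/3 := by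
    intro x hx
    rcases Classical.em (x ∈ Set.range xs) with ⟨j, rfl⟩ | hxr
    · have hj : j ≠ i0 := fun hc => hx (by rw [hc])
      have hn2 : 2 ≤ n := by
        rcases n with _ | _ | m
        · exact absurd j.2 (by omega)
        · have hj1 := j.isLt
          have hi1 := i0.isLt
          exact absurd (Fin.ext (by omega : j.val = i0.val)) hj
        · omega
      have : (1:ℝ) / ((n:ℝ) + 1) ≤ 1/3 := by
        apply one_div_le_one_div_of_le
        · norm_num
        · have : (2:ℝ) ≤ (n:ℝ) := by exact_mod_cast hn2
          linarith
      exact (hule _ hx).trans this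
    · rw [hu.2 x hxr]; norm_num
  have htv : tV (xs i0) μ ≤ 1 / ((n:ℝ) + 1) := by
    apply (Finset.fold_max_le _).2
    refine ⟨by positivity, ?_⟩
    intro x _
    by_cases hxx : x = xs i0
    · rw [if_pos hxx]; positivity
    · rw [if_neg hxx]; exact hule x hxx
  have hsv : sV (xs i0) μ = 0 := by
    apply le_antisymm _ (sV_nonneg _ _)
    apply (Finset.fold_max_le _).2
    refine ⟨le_rfl, ?_⟩
    intro A hA
    obtain ⟨hAsub, hAcard⟩ : A ⊆ Finset.univ.erase (xs i0) ∧ 2 ≤ A.card := by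
      have := Finset.mem_filter.1 hA
      exact ⟨Finset.mem_powerset.1 this.1, this.2⟩
    rcases Classical.em (∃ y ∈ A, uW μ y = 0) with ⟨y, hyA, hy0⟩ | hno
    · have : A.fold min 1 (fun x => uW μ x) ≤ 0 :=
        (Finset.fold_min_le _).2 (Or.inr ⟨y, hyA, hy0.le⟩)
      exact (min_le_left _ _).trans this
    · push_neg at hno
      have hAcard' : A.card + 1 ≤ n := by
        have hsub : A ⊆ (Finset.univ.image xs).erase (xs i0) := by
          intro x hxA
          apply Finset.mem_erase.2
          refine ⟨Finset.ne_of_mem_erase (hAsub hxA), ?_⟩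
          have hxpos : uW μ x ≠ 0 := hno x hxA
          have hxr : x ∈ Set.range xs := by
            by_contra hc
            exact hxpos (hu.2 x hc)
          obtain ⟨j, rfl⟩ := hxr
          exact Finset.mem_image_of_mem xs (Finset.mem_univ j)
        have hcard1 : ((Finset.univ.image xs).erase (xs i0)).card = n - 1 := by
          rw [Finset.card_erase_of_mem
            (Finset.mem_image_of_mem xs (Finset.mem_univ i0)),
            Finset.card_image_of_injective _ hinj, Finset.card_univ, Fintype.card_fin]
        have := Finset.card_le_card hsub
        omega
      have hfrac : (1:ℝ) / ((n:ℝ) + 1) ≤ 1 / ((A.card : ℝ) + 2) := by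
        apply one_div_le_one_div_of_le
        · positivity
        · have : ((A.card : ℝ) + 1) ≤ (n:ℝ) := by exact_mod_cast hAcard'
          linarith
      have : max 0 (tV (xs i0) μ - 1 / ((A.card:ℝ) + 2)) = 0 :=
        max_eq_left (by linarith)
      exact (min_le_right _ _).trans this.le
  have hw : ∀ x, wV (xs i0) μ x = uW μ x := by
    intro x
    by_cases hxx : x = xs i0
    · rw [hxx, wV_x0, hux0]
    · unfold wV
      rw [if_neg hxx, hsv, sub_zero, max_eq_right (uW_nonneg μ x),
        min_eq_left (hule3 x hxx)]
  funext φ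
  have hposS : ∀ i, 0 < uW μ (xs i) := by
    intro i; rw [hu.1 i]; exact Real.exp_pos _
  have heq : rhoF (xs i0) μ φ =
      Real.log (Finset.univ.fold max 0 (fun x => uW μ x * Real.exp (φ x))) := by
    unfold rhoF
    congr 1
    apply Finset.fold_congr
    intro x _
    rw [hw x]
  have h2 : (⨆ i, (Real.log (uW μ (xs i)) + φ (xs i))) = ⨆ i, (lam i + φ (xs i)) := by
    congr 1
    funext i
    rw [hu.1 i, Real.log_exp]
  rw [heq, log_fold_eq_maxPlus hn (uW μ) (uW_nonneg μ) xs hposS hu.2 φ, h2, hmu]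
  rfl

end Aux6
section Aux7
open scoped Classical
variable {X : Type*} [TopologicalSpace X] [T2Space X] [Finite X]

/-- the piece of the neighborhood around measures anchored at `x0`. -/
def Upiece (x0 : X) : Set {μ : C(X, ℝ) → ℝ // IsIPM μ} :=
  {μ | 3/5 < uW μ.1 x0 ∧ ∀ x, x ≠ x0 → uW μ.1 x < 3/5}

theorem isOpen_Upiece (x0 : X) : IsOpen (Upiece x0) := by
  have h1 : IsOpen {μ : {μ : C(X, ℝ) → ℝ // IsIPM μ} | 3/5 < uW μ.1 x0} :=
    isOpen_lt continuous_const (continuous_uW x0)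
  have h2 : IsOpen {μ : {μ : C(X, ℝ) → ℝ // IsIPM μ} | ∀ x, x ≠ x0 → uW μ.1 x < 3/5} := by
    have heq : {μ : {μ : C(X, ℝ) → ℝ // IsIPM μ} | ∀ x, x ≠ x0 → uW μ.1 x < 3/5}
        = ⋂ x : X, {μ : {μ : C(X, ℝ) → ℝ // IsIPM μ} | x ≠ x0 → uW μ.1 x < 3/5} := by
      ext μ; simp
    rw [heq]
    apply isOpen_iInter_of_finite
    intro x
    by_cases hx : x = x0
    · have : {μ : {μ : C(X, ℝ) → ℝ // IsIPM μ} | x ≠ x0 → uW μ.1 x < 3/5} = Set.univ := by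
        ext μ; simp [hx]
      rw [this]; exact isOpen_univ
    · have : {μ : {μ : C(X, ℝ) → ℝ // IsIPM μ} | x ≠ x0 → uW μ.1 x < 3/5}
          = {μ : {μ : C(X, ℝ) → ℝ // IsIPM μ} | uW μ.1 x < 3/5} := by
        ext μ; simp [hx]
      rw [this]; exact isOpen_lt (continuous_uW x) continuous_const
  exact h1.and h2

theorem Upiece_unique {x0 x1 : X} {μ : {μ : C(X, ℝ) → ℝ // IsIPM μ}}
    (h0 : μ ∈ Upiece x0) (h1 : μ ∈ Upiece x1) : x0 = x1 := by
  by_contra hne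
  have := h1.2 x0 hne
  have := h0.1
  linarith

/-- a measure in `I_f` form lies in the piece anchored at its top point. -/
theorem rep_mem_Upiece {μ : C(X, ℝ) → ℝ} {n : ℕ} (hn : 0 < n) (xs : Fin n → X)
    (lam : Fin n → ℝ) (i0 : Fin n) (hinj : Function.Injective xs)
    (h0 : lam i0 = 0) (hbd : ∀ i, i ≠ i0 → lam i ≤ -Real.log (n + 1))
    (hmu : μ = maxPlus lam xs) :
    3/5 < uW μ (xs i0) ∧ ∀ x, x ≠ xs i0 → uW μ x < 3/5 := by
  have hnpos : (0:ℝ) < (n:ℝ) + 1 := by positivity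
  have hlam0 : ∀ i, lam i ≤ 0 := by
    intro i
    by_cases hi : i = i0
    · rw [hi, h0]
    · exact (hbd i hi).trans (neg_nonpos.2 (Real.log_nonneg (by linarith)))
  have hu := uW_of_rep hn xs lam hinj hlam0 hmu
  have hux0 : uW μ (xs i0) = 1 := by rw [hu.1 i0, h0, Real.exp_zero]
  constructor
  · rw [hux0]; norm_num
  · intro x hx
    rcases Classical.em (x ∈ Set.range xs) with ⟨j, rfl⟩ | hxr
    · have hj : j ≠ i0 := fun hc => hx (by rw [hc])
      have h1 : uW μ (xs j) = Real.exp (lam j) := hu.1 j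
      have h2 : Real.exp (lam j) ≤ Real.exp (-Real.log ((n:ℝ)+1)) :=
        Real.exp_le_exp.2 (hbd j hj)
      have h3 : Real.exp (-Real.log ((n:ℝ)+1)) = 1 / ((n:ℝ)+1) := by
        rw [Real.exp_neg, Real.exp_log hnpos, one_div]
      have h4 : (1:ℝ) / ((n:ℝ)+1) ≤ 1/2 := by
        apply one_div_le_one_div_of_le
        · norm_num
        · have : (1:ℝ) ≤ (n:ℝ) := by exact_mod_cast hn
          linarith
      rw [h1]
      linarith
    · rw [hu.2 x hxr]; norm_num

end Aux7

/-- for a finite compact Hausdorff space `X`, `I_f(X)` is a neighborhood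
retract of `I(X)`: there exist an open `U ⊆ I(X)` containing `I_f(X)` and a continuous
`ρ : U → I_f(X)` fixing every point of `I_f(X)`. -/
theorem stmt11 {X : Type*} [TopologicalSpace X] [CompactSpace X] [T2Space X] [Finite X] :
    ∃ U : Set {μ : C(X, ℝ) → ℝ // IsIPM μ}, IsOpen U ∧
      (∀ μ : {μ : C(X, ℝ) → ℝ // IsIPM μ}, IsIf μ.1 → μ ∈ U) ∧
      ∃ ρ : U → C(X, ℝ) → ℝ, Continuous ρ ∧
        (∀ μ : U, IsIf (ρ μ)) ∧
        (∀ μ : U, IsIf (μ : {μ : C(X, ℝ) → ℝ // IsIPM μ}).1 →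
          ρ μ = (μ : {μ : C(X, ℝ) → ℝ // IsIPM μ}).1) := by
  classical
  rcases isEmpty_or_nonempty X with hX | hX
  · -- degenerate case: `X` empty, so there are no idempotent probability measures at all
    have hempty : IsEmpty {μ : C(X, ℝ) → ℝ // IsIPM μ} := by
      constructor
      rintro ⟨μ, h1, -, -⟩
      have hc : (ContinuousMap.const X (0:ℝ)) = ContinuousMap.const X 1 := by
        ext y; exact hX.elim y
      have e0 := h1 0
      have e1 := h1 1
      rw [hc] at e0
      linarith
    refine ⟨∅, isOpen_empty, fun μ _ => (hempty.false μ).elim, ?_⟩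
    haveI : IsEmpty (↥(∅ : Set {μ : C(X, ℝ) → ℝ // IsIPM μ})) :=
      ⟨fun μ => (hempty.false μ.1).elim⟩
    refine ⟨fun μ => (hempty.false μ.1).elim, ?_, fun μ => (hempty.false μ.1).elim,
      fun μ => (hempty.false μ.1).elim⟩
    rw [continuous_def]
    intro s _
    rw [Set.eq_empty_of_isEmpty ((fun μ => (hempty.false μ.1).elim) ⁻¹' s)]
    exact isOpen_empty
  · -- main case
    refine ⟨⋃ x0, Upiece x0, isOpen_iUnion isOpen_Upiece, ?_, ?_⟩
    · rintro μ ⟨n, hn, xs, lam, i0, hinj, h0, hbd, hmu⟩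
      exact Set.mem_iUnion.2 ⟨xs i0, rep_mem_Upiece hn xs lam i0 hinj h0 hbd hmu⟩
    · have hch : ∀ μ : ↥(⋃ x0, Upiece (X := X) x0), ∃ x0, μ.1 ∈ Upiece x0 :=
        fun μ => Set.mem_iUnion.1 μ.2
      refine ⟨fun μ => rhoF (Classical.choose (hch μ)) μ.1.1, ?_, ?_, ?_⟩
      · -- continuity
        rw [continuous_iff_continuousAt]
        intro μ
        set x0 := Classical.choose (hch μ) with hx0def
        have hx0 : μ.1 ∈ Upiece x0 := Classical.choose_spec (hch μ)
        have hVopen : IsOpen (Subtype.val ⁻¹' (Upiece x0) :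
            Set (↥(⋃ x0, Upiece (X := X) x0))) :=
          (isOpen_Upiece x0).preimage continuous_subtype_val
        have hVmem : (Subtype.val ⁻¹' (Upiece x0) :
            Set (↥(⋃ x0, Upiece (X := X) x0))) ∈ nhds μ :=
          hVopen.mem_nhds hx0
        have hcont : ContinuousAt
            (fun ν : ↥(⋃ x0, Upiece (X := X) x0) => rhoF x0 ν.1.1) μ :=
          ((continuous_rhoF x0).comp continuous_subtype_val).continuousAt
        apply hcont.congr
        apply Filter.eventuallyEq_of_mem hVmem
        intro ν hν
        have h1 : ν.1 ∈ Upiece x0 := hν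
        have h2 : ν.1 ∈ Upiece (Classical.choose (hch ν)) := Classical.choose_spec (hch ν)
        show rhoF x0 ν.1.1 = rhoF (Classical.choose (hch ν)) ν.1.1
        rw [Upiece_unique h2 h1]
      · intro μ
        exact isIf_rhoF μ.1.2 _
      · rintro μ ⟨n, hn, xs, lam, i0, hinj, h0, hbd, hmu⟩
        have h1 : μ.1 ∈ Upiece (xs i0) := rep_mem_Upiece hn xs lam i0 hinj h0 hbd hmu
        have h2 : μ.1 ∈ Upiece (Classical.choose (hch μ)) := Classical.choose_spec (hch μ)
        show rhoF (Classical.choose (hch μ)) μ.1.1 = μ.1.1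
        rw [Upiece_unique h2 h1]
        exact rhoF_fixes μ.1.2 hn xs lam i0 hinj h0 hbd hmu
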